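/- Let H be a complex Hilbert space and ε a selfadjoint unitary bounded operator on H (the grading operator). For a bounded operator x on H let x₀ = (x + εxε)/2 and x₁ = (x − εxε)/2. Then the following are equivalent: (i) the operator ι(x) := x₀ + i·x₁ is a positive operator (that is, 0 ≤ ι(x) in the C*-order on B(H)); (ii) for every ξ ∈ H, the number ⟨x₀ ξ, ξ⟩ + ⟨x₁ ξ, ε ξ⟩ is a nonnegative real. (Characterization of superpositive operators.) -/

import Mathlib

open scoped ComplexOrder

lemma isPositive_iff_complex_order
    {H : Type*} [NormedAddCommGroup H] [InnerProductSpace ℂ H] [CompleteSpace H]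
    (T : H →L[ℂ] H) :
    T.IsPositive ↔ ∀ ξ : H, 0 ≤ (inner ℂ (T ξ) ξ : ℂ) := by
  rw [ContinuousLinearMap.isPositive_iff_complex]
  apply forall_congr'
  intro ξ
  rw [Complex.le_def]
  constructor
  · rintro ⟨h1, h2⟩
    constructor
    · simpa using h2
    · have := congrArg Complex.im h1
      simpa using this
  · rintro ⟨h1, h2⟩
    refine ⟨?_, by simpa using h1⟩
    apply Complex.ext <;> simp [h2.symm]

/-- **Characterization of superpositive operators.**  Let `ε` be a selfadjoint unitary on a
complex Hilbert space `H` and `x` a bounded operator with even part `x₀ = (x + εxε)/2` and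
odd part `x₁ = (x − εxε)/2`.  Then `ι(x) = x₀ + i·x₁` is a positive operator if and only if
`⟨x₀ ξ, ξ⟩ + ⟨x₁ ξ, ε ξ⟩` is a nonnegative real for every `ξ ∈ H`. -/
theorem superpositive_iff_inner_nonneg
    {H : Type*} [NormedAddCommGroup H] [InnerProductSpace ℂ H] [CompleteSpace H]
    (ε : H →L[ℂ] H) (hε_sa : IsSelfAdjoint ε) (hε_sq : ε * ε = 1)
    (x : H →L[ℂ] H) :
    ((2⁻¹ : ℂ) • (x + ε * x * ε) + Complex.I • ((2⁻¹ : ℂ) • (x - ε * x * ε))).IsPositive ↔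
    (∀ ξ : H, 0 ≤ ((inner ℂ (((2⁻¹ : ℂ) • (x + ε * x * ε)) ξ) ξ : ℂ) +
        (inner ℂ (((2⁻¹ : ℂ) • (x - ε * x * ε)) ξ) (ε ξ) : ℂ))) := by
  set a : H →L[ℂ] H :=
    (2⁻¹ : ℂ) • (x + ε * x * ε) + Complex.I • ((2⁻¹ : ℂ) • (x - ε * x * ε)) with ha
  have hsq : ∀ v : H, ε (ε v) = v := by
    intro v
    have := congrArg (fun T : H →L[ℂ] H => T v) hε_sq
    simpa using this
  have hadj : ∀ v w : H, (inner ℂ (ε v) w : ℂ) = inner ℂ v (ε w) := by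
    intro v w
    conv_lhs => rw [← hε_sa.adjoint_eq]
    rw [ContinuousLinearMap.adjoint_inner_left]
  have key : ∀ ξ : H,
      (inner ℂ (a (ξ + Complex.I • ε ξ)) (ξ + Complex.I • ε ξ) : ℂ) =
      2 * ((inner ℂ (((2⁻¹ : ℂ) • (x + ε * x * ε)) ξ) ξ : ℂ) +
        (inner ℂ (((2⁻¹ : ℂ) • (x - ε * x * ε)) ξ) (ε ξ) : ℂ)) := by
    intro ξ
    simp only [ha, ContinuousLinearMap.add_apply, ContinuousLinearMap.smul_apply,
      ContinuousLinearMap.sub_apply, ContinuousLinearMap.mul_apply, map_add, map_smul, map_sub,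
      inner_add_left, inner_add_right, inner_smul_left, inner_smul_right, inner_sub_left,
      inner_sub_right, hsq, hadj, Complex.conj_I, map_inv₀, Complex.conj_ofNat]
    have hI2 : Complex.I ^ 2 = -1 := Complex.I_sq
    have hI3 : Complex.I ^ 3 = -Complex.I := by
      rw [pow_succ, hI2]; ring
    ring_nf
    rw [hI2, hI3]
    ring
  rw [isPositive_iff_complex_order]
  constructor
  · intro h ξ
    have h2 := h (ξ + Complex.I • ε ξ)
    rw [key ξ] at h2
    have h2inv : (0:ℂ) ≤ 2⁻¹ := by
      rw [Complex.le_def]; norm_num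
    have h3 := mul_nonneg h2inv h2
    rw [← mul_assoc] at h3
    rwa [show (2⁻¹:ℂ) * 2 = 1 from by norm_num, one_mul] at h3
  · intro h η
    set ξ : H := (2⁻¹ : ℂ) • (η - Complex.I • ε η) with hξ
    have hη : ξ + Complex.I • ε ξ = η := by
      simp only [hξ, map_smul, map_sub, smul_sub, smul_smul, hsq]
      have hI : Complex.I * (2⁻¹ * Complex.I) = -2⁻¹ := by
        rw [show Complex.I * (2⁻¹ * Complex.I) = 2⁻¹ * (Complex.I * Complex.I) from by ring,
          Complex.I_mul_I]; ring
      rw [hI]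
      module
    have h2 := h ξ
    have := key ξ
    rw [hη] at this
    rw [this]
    have h20 : (0:ℂ) ≤ 2 := by
      rw [Complex.le_def]; norm_num
    exact mul_nonneg h20 h2
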